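/- arXiv:1212.2708 — 5 statements merged into one kernel-verified Lean document; each statement's English description precedes it below -/
import Mathlib

section
/- For F(x,y,z) = x⁴ + y⁴ + z⁴ + a x² y² + b(x² + y²)z², the Hessian determinant of F at a point (x, y, 0) with x⁴ + y⁴ + a x² y² = 0 equals 2b(x²+y²)(−16a²x²y² + (2a x² + 12 y²)(12 x² + 2a y²)) up to the stated formula; in particular, if b ≠ 0 and (a-2)(a+2) ≠ 0, then no point of the form [x : 1 : 0] on the curve is a flex point, i.e., the system x⁴ + a x² + 1 = 0 and H_F(x,1,0) = 0 has no common solution. -/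
open MvPolynomial

/-- The Kuribayashi quartic with two parameters:
`F = x⁴ + y⁴ + z⁴ + a x² y² + b (x² + y²) z²`. -/
noncomputable def Fab (a b : ℂ) : MvPolynomial (Fin 3) ℂ :=
  X 0 ^ 4 + X 1 ^ 4 + X 2 ^ 4 + C a * X 0 ^ 2 * X 1 ^ 2 +
    C b * (X 0 ^ 2 + X 1 ^ 2) * X 2 ^ 2

/-- The Hessian determinant of `Fab a b`. -/
noncomputable def Hab (a b : ℂ) : MvPolynomial (Fin 3) ℂ :=
  Matrix.det (Matrix.of fun i j : Fin 3 => pderiv i (pderiv j (Fab a b)))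

set_option maxHeartbeats 1600000

lemma pderiv_two (i : Fin 3) : pderiv i ((2 : MvPolynomial (Fin 3) ℂ)) = 0 := by
  have h : (2 : MvPolynomial (Fin 3) ℂ) = ((2 : ℕ) : MvPolynomial (Fin 3) ℂ) := by norm_cast
  rw [h, (pderiv i).map_natCast]

lemma pderiv_three (i : Fin 3) : pderiv i ((3 : MvPolynomial (Fin 3) ℂ)) = 0 := by
  have h : (3 : MvPolynomial (Fin 3) ℂ) = ((3 : ℕ) : MvPolynomial (Fin 3) ℂ) := by norm_cast
  rw [h, (pderiv i).map_natCast]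

lemma pderiv_four (i : Fin 3) : pderiv i ((4 : MvPolynomial (Fin 3) ℂ)) = 0 := by
  have h : (4 : MvPolynomial (Fin 3) ℂ) = ((4 : ℕ) : MvPolynomial (Fin 3) ℂ) := by norm_cast
  rw [h, (pderiv i).map_natCast]

lemma pderiv_twelve (i : Fin 3) : pderiv i ((12 : MvPolynomial (Fin 3) ℂ)) = 0 := by
  have h : (12 : MvPolynomial (Fin 3) ℂ) = ((12 : ℕ) : MvPolynomial (Fin 3) ℂ) := by norm_cast
  rw [h, (pderiv i).map_natCast]

lemma pd0 (a b : ℂ) : pderiv 0 (Fab a b) =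
    C 4 * X 0 ^ 3 + C a * (C 2 * X 0 * X 1 ^ 2) + C b * (C 2 * X 0 * X 2 ^ 2) := by
  simp [Fab, pderiv_pow, pderiv_mul, pderiv_X, Pi.single_apply, map_ofNat, Derivation.map_natCast, pderiv_two, pderiv_three, pderiv_four, pderiv_twelve]
  ring

lemma pd1 (a b : ℂ) : pderiv 1 (Fab a b) =
    C 4 * X 1 ^ 3 + C a * (C 2 * X 0 ^ 2 * X 1) + C b * (C 2 * X 1 * X 2 ^ 2) := by
  simp [Fab, pderiv_pow, pderiv_mul, pderiv_X, Pi.single_apply, map_ofNat, Derivation.map_natCast, pderiv_two, pderiv_three, pderiv_four, pderiv_twelve]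
  ring

lemma pd2 (a b : ℂ) : pderiv 2 (Fab a b) =
    C 4 * X 2 ^ 3 + C b * ((X 0 ^ 2 + X 1 ^ 2) * (C 2 * X 2)) := by
  simp [Fab, pderiv_pow, pderiv_mul, pderiv_X, Pi.single_apply, map_ofNat, Derivation.map_natCast, pderiv_two, pderiv_three, pderiv_four, pderiv_twelve]
  ring

lemma pd00 (a b : ℂ) : pderiv 0 (pderiv 0 (Fab a b)) =
    C 12 * X 0 ^ 2 + C a * (C 2 * X 1 ^ 2) + C b * (C 2 * X 2 ^ 2) := by
  rw [pd0]; simp [pderiv_pow, pderiv_mul, pderiv_X, Pi.single_apply, map_ofNat, Derivation.map_natCast, pderiv_two, pderiv_three, pderiv_four, pderiv_twelve]; first | ring1 | exact Or.inl (by ring)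

lemma pd10 (a b : ℂ) : pderiv 1 (pderiv 0 (Fab a b)) = C a * (C 4 * X 0 * X 1) := by
  rw [pd0]; simp [pderiv_pow, pderiv_mul, pderiv_X, Pi.single_apply, map_ofNat, Derivation.map_natCast, pderiv_two, pderiv_three, pderiv_four, pderiv_twelve]; first | ring1 | exact Or.inl (by ring)

lemma pd20 (a b : ℂ) : pderiv 2 (pderiv 0 (Fab a b)) = C b * (C 4 * X 0 * X 2) := by
  rw [pd0]; simp [pderiv_pow, pderiv_mul, pderiv_X, Pi.single_apply, map_ofNat, Derivation.map_natCast, pderiv_two, pderiv_three, pderiv_four, pderiv_twelve]; first | ring1 | exact Or.inl (by ring)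

lemma pd01 (a b : ℂ) : pderiv 0 (pderiv 1 (Fab a b)) = C a * (C 4 * X 0 * X 1) := by
  rw [pd1]; simp [pderiv_pow, pderiv_mul, pderiv_X, Pi.single_apply, map_ofNat, Derivation.map_natCast, pderiv_two, pderiv_three, pderiv_four, pderiv_twelve]; first | ring1 | exact Or.inl (by ring)

lemma pd11 (a b : ℂ) : pderiv 1 (pderiv 1 (Fab a b)) =
    C 12 * X 1 ^ 2 + C a * (C 2 * X 0 ^ 2) + C b * (C 2 * X 2 ^ 2) := by
  rw [pd1]; simp [pderiv_pow, pderiv_mul, pderiv_X, Pi.single_apply, map_ofNat, Derivation.map_natCast, pderiv_two, pderiv_three, pderiv_four, pderiv_twelve]; first | ring1 | exact Or.inl (by ring)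

lemma pd21 (a b : ℂ) : pderiv 2 (pderiv 1 (Fab a b)) = C b * (C 4 * X 1 * X 2) := by
  rw [pd1]; simp [pderiv_pow, pderiv_mul, pderiv_X, Pi.single_apply, map_ofNat, Derivation.map_natCast, pderiv_two, pderiv_three, pderiv_four, pderiv_twelve]; first | ring1 | exact Or.inl (by ring)

lemma pd02 (a b : ℂ) : pderiv 0 (pderiv 2 (Fab a b)) = C b * (C 4 * X 0 * X 2) := by
  rw [pd2]; simp [pderiv_pow, pderiv_mul, pderiv_X, Pi.single_apply, map_ofNat, Derivation.map_natCast, pderiv_two, pderiv_three, pderiv_four, pderiv_twelve]; first | ring1 | exact Or.inl (by ring)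

lemma pd12 (a b : ℂ) : pderiv 1 (pderiv 2 (Fab a b)) = C b * (C 4 * X 1 * X 2) := by
  rw [pd2]; simp [pderiv_pow, pderiv_mul, pderiv_X, Pi.single_apply, map_ofNat, Derivation.map_natCast, pderiv_two, pderiv_three, pderiv_four, pderiv_twelve]; first | ring1 | exact Or.inl (by ring)

lemma pd22 (a b : ℂ) : pderiv 2 (pderiv 2 (Fab a b)) =
    C 12 * X 2 ^ 2 + C b * ((X 0 ^ 2 + X 1 ^ 2) * C 2) := by
  rw [pd2]; simp [pderiv_pow, pderiv_mul, pderiv_X, Pi.single_apply, map_ofNat, Derivation.map_natCast, pderiv_two, pderiv_three, pderiv_four, pderiv_twelve]; first | ring1 | exact Or.inl (by ring)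

lemma hval (a b x y : ℂ) : eval ![x, y, 0] (Hab a b) =
    2 * b * (x ^ 2 + y ^ 2) *
      (-16 * a ^ 2 * x ^ 2 * y ^ 2 +
        (2 * a * x ^ 2 + 12 * y ^ 2) * (12 * x ^ 2 + 2 * a * y ^ 2)) := by
  rw [Hab, Matrix.det_fin_three]
  simp only [Matrix.of_apply, pd00, pd01, pd02, pd10, pd11, pd12, pd20, pd21, pd22,
    map_add, map_sub, map_mul, map_pow, map_ofNat, eval_C, eval_X,
    Matrix.cons_val_zero, Matrix.cons_val_one, Matrix.head_cons,
    Matrix.cons_val_two, Matrix.tail_cons]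
  ring

/-- The Hessian of `C_{a,b}` at points `(x, y, 0)` of the curve has the stated form, and
if `b ≠ 0` and `(a-2)(a+2) ≠ 0` then no point `[x : 1 : 0]` of the curve is a flex. -/
theorem hessian_at_z_zero_and_no_flex_at_infinity (a b : ℂ) (hb : b ≠ 0)
    (ha : (a - 2) * (a + 2) ≠ 0) :
    (∀ x y : ℂ, x ^ 4 + y ^ 4 + a * x ^ 2 * y ^ 2 = 0 →
      eval ![x, y, 0] (Hab a b) =
        2 * b * (x ^ 2 + y ^ 2) *
          (-16 * a ^ 2 * x ^ 2 * y ^ 2 +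
            (2 * a * x ^ 2 + 12 * y ^ 2) * (12 * x ^ 2 + 2 * a * y ^ 2))) ∧
    ¬ ∃ x : ℂ, x ^ 4 + a * x ^ 2 + 1 = 0 ∧ eval ![x, 1, 0] (Hab a b) = 0 := by
  constructor
  · intro x y _
    exact hval a b x y
  · rintro ⟨x, hcurve, hH⟩
    rw [hval a b x 1] at hH
    have key : (-72 : ℂ) * b * ((a - 2) * (a + 2)) * (x ^ 2 * (x ^ 2 + 1)) = 0 := by
      linear_combination hH - 48 * a * b * (x ^ 2 + 1) * hcurve
    have h72 : (-72 : ℂ) * b * ((a - 2) * (a + 2)) ≠ 0 := by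
      intro h
      rcases mul_eq_zero.1 h with h | h
      · rcases mul_eq_zero.1 h with h | h
        · norm_num at h
        · exact hb h
      · exact ha h
    have hx : x ^ 2 * (x ^ 2 + 1) = 0 := by
      rcases mul_eq_zero.1 key with h | h
      · exact absurd h h72
      · exact h
    rcases mul_eq_zero.1 hx with h | h
    · have hx0 : x = 0 := by
        exact pow_eq_zero_iff (by norm_num) |>.1 h
      rw [hx0] at hcurve
      norm_num at hcurve
    · apply ha
      have ha2 : a - 2 = 0 := by
        linear_combination (x ^ 2 - 1 + a) * h - hcurve
      rw [ha2, zero_mul]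
end

section
/- For F(x,y,z) = x⁴ + y⁴ + z⁴ + a x² y² + b(x²+y²)z², the resultant with respect to x of the polynomials F(x,0,1) = x⁴ + b x² + 1 and H_F(x,0,1) equals a nonzero constant times ((b²−4)²(a² + b² − a b²))². In particular, assuming b² ≠ 4, the polynomials F(x,0,1) and H_F(x,0,1) have a common complex root if and only if a² + b² − a b² = 0. -/
set_option maxHeartbeats 1600000

open Polynomial

/-- The Sylvester matrix of two polynomials `p, q` regarded as having degrees `m, n`. -/
noncomputable def sylvester (p q : ℂ[X]) (m n : ℕ) : Matrix (Fin (m + n)) (Fin (m + n)) ℂ :=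
  Matrix.of fun i j =>
    if (i : ℕ) < n then
      (if (i : ℕ) ≤ (j : ℕ) then p.coeff ((j : ℕ) - (i : ℕ)) else 0)
    else
      (if (i : ℕ) - n ≤ (j : ℕ) then q.coeff ((j : ℕ) - ((i : ℕ) - n)) else 0)

/-- The resultant, as the determinant of the Sylvester matrix. -/
noncomputable def res (p q : ℂ[X]) (m n : ℕ) : ℂ := (_root_.sylvester p q m n).det

/-- `F(x,0,1) = x⁴ + b x² + 1`. -/
noncomputable def P6 (b : ℂ) : ℂ[X] := X ^ 4 + C b * X ^ 2 + 1

/-- `H_F(x,0,1)`, the Hessian determinant of the Kuribayashi quartic at `(x,0,1)`. -/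
noncomputable def H6 (a b : ℂ) : ℂ[X] :=
  (C (2 * b) + C 12 * X ^ 2) * (C (2 * b) + C (2 * a) * X ^ 2) * (C 12 + C (2 * b) * X ^ 2) +
    C (4 * b) * X * (C (-8 * b ^ 2) * X + C (-8 * a * b) * X ^ 3)

lemma H6_eq (a b : ℂ) : H6 a b =
    C (48*b^2) + C (-24*b^3+48*a*b+288*b) * X^2 + C (-24*a*b^2+48*b^2+288*a) * X^4 +
      C (48*a*b) * X^6 := by
  apply Polynomial.funext
  intro x
  simp only [H6, eval_add, eval_mul, eval_pow, eval_C, eval_X]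
  ring

/-- The 5×5 "even part" of the Sylvester matrix. -/
noncomputable def A5 (a b : ℂ) : Matrix (Fin 5) (Fin 5) ℂ :=
  !![1, b, 1, 0, 0;
     0, 1, b, 1, 0;
     0, 0, 1, b, 1;
     48*b^2, -24*b^3+48*a*b+288*b, -24*a*b^2+48*b^2+288*a, 48*a*b, 0;
     0, 48*b^2, -24*b^3+48*a*b+288*b, -24*a*b^2+48*b^2+288*a, 48*a*b]

set_option maxRecDepth 100000 in
lemma detA5 (a b : ℂ) : (A5 a b).det = 5184*((b^2-4)^2*(a^2+b^2-a*b^2)) := by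
  simp [A5, Matrix.det_succ_row_zero, Fin.sum_univ_succ, Fin.succAbove]
  ring

/-- Reindexing of `Fin 10` by parity. -/
def e10 : (Fin 5 ⊕ Fin 5) ≃ Fin (4 + 6) where
  toFun := Sum.elim ![0, 2, 4, 6, 8] ![1, 3, 5, 7, 9]
  invFun := ![Sum.inl 0, Sum.inr 0, Sum.inl 1, Sum.inr 1, Sum.inl 2, Sum.inr 2, Sum.inl 3,
    Sum.inr 3, Sum.inl 4, Sum.inr 4]
  left_inv := by decide
  right_inv := by decide

lemma v0 : ((0 : Fin (4+6)) : ℕ) = 0 := rfl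
lemma v1 : ((1 : Fin (4+6)) : ℕ) = 1 := rfl
lemma v2 : ((2 : Fin (4+6)) : ℕ) = 2 := rfl
lemma v3 : ((3 : Fin (4+6)) : ℕ) = 3 := rfl
lemma v4 : ((4 : Fin (4+6)) : ℕ) = 4 := rfl
lemma v5 : ((5 : Fin (4+6)) : ℕ) = 5 := rfl
lemma v6 : ((6 : Fin (4+6)) : ℕ) = 6 := rfl
lemma v7 : ((7 : Fin (4+6)) : ℕ) = 7 := rfl
lemma v8 : ((8 : Fin (4+6)) : ℕ) = 8 := rfl
lemma v9 : ((9 : Fin (4+6)) : ℕ) = 9 := rfl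

lemma sylv_block (a b : ℂ) :
    (_root_.sylvester (P6 b) (H6 a b) 4 6).submatrix e10 e10 =
      Matrix.fromBlocks (A5 a b) 0 0 (A5 a b) := by
  have hP : ∀ k : ℕ, (P6 b).coeff k =
      if k = 0 then 1 else if k = 2 then b else if k = 4 then 1 else 0 := by
    intro k
    simp only [P6, coeff_add, coeff_C_mul, coeff_X_pow, coeff_one]
    split_ifs <;> first | ring1 | (exfalso; omega)
  have hH : ∀ k : ℕ, (H6 a b).coeff k =
      if k = 0 then 48*b^2 else if k = 2 then -24*b^3+48*a*b+288*b
      else if k = 4 then -24*a*b^2+48*b^2+288*a else if k = 6 then 48*a*b else 0 := by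
    intro k
    rw [H6_eq]
    simp only [coeff_add, coeff_C_mul, coeff_X_pow, coeff_C]
    split_ifs <;> first | ring1 | (exfalso; omega)
  ext i j
  rcases i with i | i <;> rcases j with j | j <;>
    fin_cases i <;> fin_cases j <;>
    norm_num [_root_.sylvester, e10, A5, hP, hH, Matrix.fromBlocks, Matrix.submatrix_apply,
      v0, v1, v2, v3, v4, v5, v6, v7, v8, v9] <;>
    first
      | omega
      | decide
      | (intro h; exact absurd h (by omega))
      | (intro h; exact absurd h (by decide))

lemma detblock {m : Type*} [DecidableEq m] [Fintype m] (A B : Matrix m m ℂ) :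
    (Matrix.fromBlocks A 0 0 B).det = A.det * B.det :=
  Matrix.det_fromBlocks_zero₂₁ _ _ _

lemma res_eq (a b : ℂ) :
    res (P6 b) (H6 a b) 4 6 = 26873856 * ((b^2-4)^2*(a^2+b^2-a*b^2))^2 := by
  have h := Matrix.det_submatrix_equiv_self e10 (_root_.sylvester (P6 b) (H6 a b) 4 6)
  rw [sylv_block, detblock, detA5] at h
  rw [res, ← h]
  ring

/-- The resultant of `F(x,0,1)` and `H_F(x,0,1)` is a nonzero constant times
`((b²-4)²(a² + b² - ab²))²`; in particular (for `b ≠ 0`, `b² ≠ 4`) these polynomials have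
a common root iff `a² + b² - ab² = 0`. -/
theorem resultant_x_axis :
    (∃ c : ℂ, c ≠ 0 ∧ ∀ a b : ℂ,
      res (P6 b) (H6 a b) 4 6 = c * ((b ^ 2 - 4) ^ 2 * (a ^ 2 + b ^ 2 - a * b ^ 2)) ^ 2) ∧
    (∀ a b : ℂ, b ≠ 0 → b ^ 2 ≠ 4 →
      ((∃ x : ℂ, (P6 b).eval x = 0 ∧ (H6 a b).eval x = 0) ↔ a ^ 2 + b ^ 2 - a * b ^ 2 = 0)) := by
  constructor
  · exact ⟨26873856, by norm_num, fun a b => res_eq a b⟩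
  · intro a b hb hb2
    have hb4 : b^2 - 4 ≠ 0 := fun h => hb2 (by linear_combination h)
    have h72 : (72:ℂ) * (b^2-4) ≠ 0 := mul_ne_zero (by norm_num) hb4
    constructor
    · rintro ⟨x, hP, hH⟩
      have hP' : x^4 + b*x^2 + 1 = 0 := by
        simp only [P6, eval_add, eval_mul, eval_pow, eval_C, eval_X, eval_one] at hP
        linear_combination hP
      have hH' : 48*a*b*x^6 + (-24*a*b^2+48*b^2+288*a)*x^4 + (-24*b^3+48*a*b+288*b)*x^2
          + 48*b^2 = 0 := by
        simp only [H6, eval_add, eval_mul, eval_pow, eval_C, eval_X] at hH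
        linear_combination hH
      have key : (72:ℂ) * (b^2-4) * (b*(a-1)*x^2 + a) = 0 := by
        linear_combination hH' - (48*a*b*x^2 + (-72*a*b^2+48*b^2+288*a))*hP'
      have key' : b*(a-1)*x^2 + a = 0 := (mul_eq_zero.mp key).resolve_left h72
      linear_combination (b*(a-1))^2*hP' + (a - b*(a-1)*x^2 - b^2*(a-1))*key'
    · intro hT
      have ha1 : a ≠ 1 := by
        intro h
        rw [h] at hT
        exact one_ne_zero (α := ℂ) (by linear_combination hT)
      have hα : b*(a-1) ≠ 0 := mul_ne_zero hb (sub_ne_zero.mpr ha1)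
      set t : ℂ := -a / (b*(a-1)) with ht_def
      have ht : b*(a-1)*t + a = 0 := by
        rw [ht_def, mul_div_cancel₀ _ hα]
        ring
      have hq : t^2 + b*t + 1 = 0 := by
        have h2 : (b*(a-1))^2 * (t^2+b*t+1) = 0 := by
          linear_combination hT + (b*(a-1)*t - a + b*(b*(a-1)))*ht
        exact (mul_eq_zero.mp h2).resolve_left (pow_ne_zero 2 hα)
      obtain ⟨x, hx⟩ := Complex.isAlgClosed.exists_pow_nat_eq t (n := 2) (by norm_num)
      have hP' : x^4 + b*x^2 + 1 = 0 := by
        linear_combination hq + (x^2 + t + b)*hx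
      have hkey : b*(a-1)*x^2 + a = 0 := by
        linear_combination ht + b*(a-1)*hx
      refine ⟨x, ?_, ?_⟩
      · simp only [P6, eval_add, eval_mul, eval_pow, eval_C, eval_X, eval_one]
        linear_combination hP'
      · simp only [H6, eval_add, eval_mul, eval_pow, eval_C, eval_X]
        linear_combination (48*a*b*x^2 + (-72*a*b^2+48*b^2+288*a))*hP' + 72*(b^2-4)*hkey
end

section
/- Suppose b² ≠ 4 and a = (b² + b√(b²−4))/2 (for a fixed square root √(b²−4)). Then x = √2/√(−b − √(b²−4)) satisfies both x⁴ + b x² + 1 = 0 and H_F(x,0,1) = 0, where H_F is the Hessian determinant of F(x,y,z) = x⁴ + y⁴ + z⁴ + a x² y² + b(x²+y²)z². Hence [x : 0 : 1] is a flex point of C_{a,b}. -/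
open MvPolynomial

lemma pd_ofNat (i : Fin 3) (n : ℕ) [n.AtLeastTwo] :
    pderiv i (OfNat.ofNat n : MvPolynomial (Fin 3) ℂ) = 0 := by
  rw [show (OfNat.ofNat n : MvPolynomial (Fin 3) ℂ) = ((n : ℕ) : MvPolynomial (Fin 3) ℂ) by
    norm_cast]
  exact Derivation.map_natCast _ n

lemma pd4 (i : Fin 3) : pderiv i (4 : MvPolynomial (Fin 3) ℂ) = 0 := pd_ofNat i 4
lemma pd2_s7 (i : Fin 3) : pderiv i (2 : MvPolynomial (Fin 3) ℂ) = 0 := pd_ofNat i 2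
lemma pd3 (i : Fin 3) : pderiv i (3 : MvPolynomial (Fin 3) ℂ) = 0 := pd_ofNat i 3
lemma pd12_s7 (i : Fin 3) : pderiv i (12 : MvPolynomial (Fin 3) ℂ) = 0 := pd_ofNat i 12

lemma evalHab (a b x : ℂ) :
    eval ![x, 0, 1] (Hab a b) =
      (2*a*x^2 + 2*b) * ((12*x^2 + 2*b)*(12 + 2*b*x^2) - (4*b*x)^2) := by
  rw [Hab, Matrix.det_fin_three]
  simp [Fab, pderiv_X, Pi.single_apply, pd4, pd3, pd2_s7, pd12_s7]
  ring

/-- If `a = (b² + b√(b²-4))/2` then `x = √2/√(-b - √(b²-4))` satisfies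
`x⁴ + bx² + 1 = 0` and `H_F(x,0,1) = 0`, so `[x:0:1]` is a flex point of `C_{a,b}`. -/
theorem flex_on_x_axis (a b s x : ℂ) (hb : b ≠ 0) (hb4 : b ^ 2 ≠ 4)
    (hs : s ^ 2 = b ^ 2 - 4) (ha : a = (b ^ 2 + b * s) / 2)
    (hx : x ^ 2 * (-b - s) = 2) :
    x ^ 4 + b * x ^ 2 + 1 = 0 ∧ eval ![x, 0, 1] (Hab a b) = 0 := by
  have ht : x ^ 2 = (-b + s) / 2 := by
    linear_combination ((-b + s) / 4) * hx + (x ^ 2 / 4) * hs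
  constructor
  · linear_combination (x ^ 2 + (-b + s) / 2 + b) * ht + (1 / 4) * hs
  · rw [evalHab]
    have h0 : 2 * a * x ^ 2 + 2 * b = 0 := by
      rw [ha, ht]
      linear_combination (b / 2) * hs
    rw [h0, zero_mul]
end

section
/- If b ≠ 0 and (a−2)(a+2) ≠ 0, then there is no x ∈ ℂ with x⁴ + a x² + 1 = 0 and 2b(1+x²)(−16a²x² + (2a + 12x²)(12 + 2a x²)) = 0 simultaneously; i.e., no point [δ : 1 : 0] on the curve C_{a,b} : x⁴ + y⁴ + z⁴ + a x² y² + b(x²+y²)z² = 0 is a flex point. -/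
/-- If `b ≠ 0` and `(a-2)(a+2) ≠ 0`, no point `[x : 1 : 0]` of the curve
`C_{a,b} : x⁴ + y⁴ + z⁴ + a x² y² + b(x² + y²)z² = 0` is a flex point: the equations
`x⁴ + ax² + 1 = 0` and `H_F(x,1,0) = 2b(1+x²)(-16a²x² + (2a+12x²)(12+2ax²)) = 0` have
no common solution. -/
theorem no_flex_at_infinity (a b : ℂ) (hb : b ≠ 0) (ha : (a - 2) * (a + 2) ≠ 0) :
    ¬ ∃ x : ℂ, x ^ 4 + a * x ^ 2 + 1 = 0 ∧
      2 * b * (1 + x ^ 2) *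
        (-16 * a ^ 2 * x ^ 2 + (2 * a + 12 * x ^ 2) * (12 + 2 * a * x ^ 2)) = 0 := by
  rintro ⟨x, h1, h2⟩
  have h2' : (1 + x ^ 2) *
      (-16 * a ^ 2 * x ^ 2 + (2 * a + 12 * x ^ 2) * (12 + 2 * a * x ^ 2)) = 0 := by
    have h2b : (2 * b) * ((1 + x ^ 2) *
        (-16 * a ^ 2 * x ^ 2 + (2 * a + 12 * x ^ 2) * (12 + 2 * a * x ^ 2))) = 0 := by
      linear_combination h2
    rcases mul_eq_zero.mp h2b with h | h
    · exact absurd h (mul_ne_zero two_ne_zero hb)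
    · exact h
  rcases mul_eq_zero.mp h2' with h | h
  · exact ha (by linear_combination (-(a + 2)) * h1 + (a + 2) * (x ^ 2 + a - 1) * h)
  · have h4 : (4 - a ^ 2) ≠ 0 := fun hh => ha (by linear_combination -hh)
    have h36 : 36 * x ^ 2 * (4 - a ^ 2) = 0 := by linear_combination h - 24 * a * h1
    have hx : x ^ 2 = 0 := by
      rcases mul_eq_zero.mp h36 with h' | h'
      · rcases mul_eq_zero.mp h' with h'' | h''
        · norm_num at h''
        · exact h''
      · exact absurd h' h4
    have : (1 : ℂ) = 0 := by linear_combination h1 - (x ^ 2 + a) * hx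
    norm_num at this
end

section
/- Assume b ≠ 0, a ≠ −2, b² ≠ a + 2 and b² ≠ 4. Then the polynomials (2+a)x⁴ + 2b x² + 1 and −64b²x²(b − (a−6)x²) + 16(3 + b x²)(−4a²x⁴ + (b + (6+a)x²)²) have a common complex root if and only if 36 − 12a + a² − 10b² + 3a b² = 0. Equivalently, the curve C_{a,b} has a flex point of the form [x : x : 1] iff Q(a,b) := 36 − 12a + a² − 10b² + 3ab² = 0. -/
/-- For `b ≠ 0`, `a ≠ -2`, `b² ≠ a + 2`, `b² ≠ 4`: the curve `C_{a,b}` has a flex point of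
the form `[x : x : 1]`, i.e. the polynomials `(2+a)x⁴ + 2bx² + 1` and the Hessian
`H_F(x,x,1)` have a common root, if and only if `36 - 12a + a² - 10b² + 3ab² = 0`. -/
theorem diagonal_flex_iff (a b : ℂ) (hb : b ≠ 0) (ha : a + 2 ≠ 0)
    (hab : b ^ 2 - a - 2 ≠ 0) (hb4 : b ^ 2 - 4 ≠ 0) :
    (∃ x : ℂ, (2 + a) * x ^ 4 + 2 * b * x ^ 2 + 1 = 0 ∧
      -64 * b ^ 2 * x ^ 2 * (b - (a - 6) * x ^ 2) +
        16 * (3 + b * x ^ 2) *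
          (-4 * a ^ 2 * x ^ 4 + (b + (6 + a) * x ^ 2) ^ 2) = 0) ↔
    36 - 12 * a + a ^ 2 - 10 * b ^ 2 + 3 * a * b ^ 2 = 0 := by
  constructor
  · rintro ⟨x, hP, hH⟩
    -- c0, c1 : remainder of (a+2)^2 * H modulo P is c1 * x^2 + c0
    have hlin : (-144 * b * (a + 2) * (b ^ 2 - a - 2) * (3 * a - 10)) * x ^ 2 +
        (-144 * (a + 2) * (a - 6) * (b ^ 2 - a - 2)) = 0 := by
      linear_combination (a + 2) ^ 2 * hH -
        ((3456 + 2880 * a + 288 * a ^ 2 - 144 * a ^ 3 +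
          (-1536 - 384 * a + 192 * a ^ 2) * b ^ 2) +
          (1152 + 960 * a + 96 * a ^ 2 - 48 * a ^ 3) * b * x ^ 2) * hP
    have hE : (20736 * (a + 2) ^ 3 * (b ^ 2 - a - 2) ^ 2) *
        (36 - 12 * a + a ^ 2 - 10 * b ^ 2 + 3 * a * b ^ 2) = 0 := by
      linear_combination (-144 * b * (a + 2) * (b ^ 2 - a - 2) * (3 * a - 10)) ^ 2 * hP -
        ((a + 2) * (-144 * b * (a + 2) * (b ^ 2 - a - 2) * (3 * a - 10)) * x ^ 2 +
          2 * b * (-144 * b * (a + 2) * (b ^ 2 - a - 2) * (3 * a - 10)) -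
          (a + 2) * (-144 * (a + 2) * (a - 6) * (b ^ 2 - a - 2))) * hlin
    have hne : (20736 : ℂ) * (a + 2) ^ 3 * (b ^ 2 - a - 2) ^ 2 ≠ 0 :=
      mul_ne_zero (mul_ne_zero (by norm_num) (pow_ne_zero _ ha)) (pow_ne_zero _ hab)
    exact (mul_eq_zero.mp hE).resolve_left hne
  · intro hQ
    have h3a : 3 * a - 10 ≠ 0 := by
      intro h0
      have h64 : (64 : ℂ) = 0 := by
        linear_combination 9 * hQ - (9 * b ^ 2 + 3 * a - 26) * h0
      norm_num at h64
    have hd : b * (3 * a - 10) ≠ 0 := mul_ne_zero hb h3a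
    obtain ⟨x, hx2⟩ := IsAlgClosed.exists_pow_nat_eq ((6 - a) / (b * (3 * a - 10)))
      (by norm_num : 0 < 2)
    have h1 : b * (3 * a - 10) * x ^ 2 = 6 - a := by
      rw [hx2]; field_simp
    have hP : (2 + a) * x ^ 4 + 2 * b * x ^ 2 + 1 = 0 := by
      have hP' : (b * (3 * a - 10)) ^ 2 * ((2 + a) * x ^ 4 + 2 * b * x ^ 2 + 1) = 0 := by
        linear_combination (a + 2) * hQ +
          ((2 + a) * (b * (3 * a - 10) * x ^ 2 + 6 - a) + 2 * b * (b * (3 * a - 10))) * h1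
      exact (mul_eq_zero.mp hP').resolve_left (pow_ne_zero 2 hd)
    refine ⟨x, hP, ?_⟩
    have hlin : (-144 * b * (a + 2) * (b ^ 2 - a - 2) * (3 * a - 10)) * x ^ 2 +
        (-144 * (a + 2) * (a - 6) * (b ^ 2 - a - 2)) = 0 := by
      linear_combination (-144 * (a + 2) * (b ^ 2 - a - 2)) * h1
    have hH2 : (a + 2) ^ 2 * (-64 * b ^ 2 * x ^ 2 * (b - (a - 6) * x ^ 2) +
        16 * (3 + b * x ^ 2) *
          (-4 * a ^ 2 * x ^ 4 + (b + (6 + a) * x ^ 2) ^ 2)) = 0 := by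
      linear_combination ((3456 + 2880 * a + 288 * a ^ 2 - 144 * a ^ 3 +
          (-1536 - 384 * a + 192 * a ^ 2) * b ^ 2) +
          (1152 + 960 * a + 96 * a ^ 2 - 48 * a ^ 3) * b * x ^ 2) * hP + hlin
    exact (mul_eq_zero.mp hH2).resolve_left (pow_ne_zero 2 ha)
end
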